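/- arXiv:2108.11816 — 2 statements merged into one kernel-verified Lean document; each statement's English description precedes it below -/
import Mathlib

section
/- For a multigraph G and a pair of functions g, h : V(G) → ℕ ∪ {∞}, G is (g,h)-orientable if and only if (1) d(v) ≤ g(v) + h(v) for every vertex v of G, and (2) e(S) ≤ min{g(S), h(S)} for every vertex subset S ⊆ V(G). -/
open Classical

noncomputable section

namespace MG

variable {V : Type} {E : Type} [Fintype V] [Fintype E] [DecidableEq V]

/-- The number of times vertex `v` occurs as an endpoint of the unordered pair `s`
(so a loop at `v` counts twice). -/
def mult (v : V) (s : Sym2 V) : ℕ :=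
  Sym2.lift ⟨fun a b => (if a = v then 1 else 0) + (if b = v then 1 else 0),
    fun _ _ => add_comm _ _⟩ s

/-- The degree of a vertex in the multigraph whose edges `E` have endpoints given
by `ends` (loops count twice). -/
def degree (ends : E → Sym2 V) (v : V) : ℕ := ∑ e : E, mult v (ends e)

/-- Maximum degree `Δ(G)`. -/
def maxDegree (ends : E → Sym2 V) : ℕ := Finset.univ.sup fun v => degree ends v

/-- `e(S)`: the number of edges with all endpoints in `S`. -/
def edgesWithin (ends : E → Sym2 V) (S : Finset V) : ℕ :=
  (Finset.univ.filter fun e => ∀ v ∈ ends e, v ∈ S).card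

/-- The degree of `v` in the subgraph induced by `S`. -/
def degreeIn (ends : E → Sym2 V) (S : Finset V) (v : V) : ℕ :=
  ∑ e ∈ Finset.univ.filter (fun e => ∀ u ∈ ends e, u ∈ S), mult v (ends e)

/-- Adjacency; a vertex with a loop is adjacent to itself. -/
def Adj (ends : E → Sym2 V) (u v : V) : Prop := ∃ e, ends e = s(u, v)

/-- The multigraph has no loops. -/
def Loopless (ends : E → Sym2 V) : Prop := ∀ e, ¬ (ends e).IsDiag

/-- Reachability by walks. -/
def Reaches (ends : E → Sym2 V) (u v : V) : Prop :=
  Relation.ReflTransGen (Adj ends) u v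

/-- The connected component of `v`, as a set of vertices. -/
def component (ends : E → Sym2 V) (v : V) : Finset V :=
  Finset.univ.filter fun u => Reaches ends v u

/-- A pseudoforest: every connected component contains at most one cycle
(a loop counts as a cycle); equivalently, every connected component has at
most as many edges as vertices. -/
def IsPseudoforest (ends : E → Sym2 V) : Prop :=
  ∀ v : V, edgesWithin ends (component ends v) ≤ (component ends v).card

/-- A forest (acyclic multigraph): every connected component has strictly fewer
edges than vertices. -/
def IsForest (ends : E → Sym2 V) : Prop :=
  ∀ v : V, edgesWithin ends (component ends v) + 1 ≤ (component ends v).card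

/-- An orientation assigns to each edge an ordered pair of its endpoints
(tail, head). -/
def IsOrientation (ends : E → Sym2 V) (D : E → V × V) : Prop :=
  ∀ e, Sym2.mk (D e).1 (D e).2 = ends e

/-- Indegree of `v` under the orientation `D`. -/
def inDeg (D : E → V × V) (v : V) : ℕ := (Finset.univ.filter fun e => (D e).2 = v).card

/-- Outdegree of `v` under the orientation `D`. -/
def outDeg (D : E → V × V) (v : V) : ℕ := (Finset.univ.filter fun e => (D e).1 = v).card

/-- `G` is `(g,h)`-orientable: there is an orientation in which every vertex `v`
has indegree at most `g v` and outdegree at most `h v`. -/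
def GHOrientable (ends : E → Sym2 V) (g h : V → ℕ∞) : Prop :=
  ∃ D : E → V × V, IsOrientation ends D ∧
    (∀ v, (inDeg D v : ℕ∞) ≤ g v) ∧ (∀ v, (outDeg D v : ℕ∞) ≤ h v)

/-- `(g,h)` is a valid pair of functions for `G`. -/
def ValidPair (ends : E → Sym2 V) (g h : V → ℕ∞) : Prop :=
  (∀ v : V, 1 ≤ g v + h v) ∧
  (∀ u v : V, Adj ends u v → 1 ≤ g u + g v) ∧
  (∀ u v : V, Adj ends u v → 1 ≤ h u + h v)

/-- The endpoint map of the subgraph consisting of the edges satisfying `P`. -/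
def subEnds (ends : E → Sym2 V) (P : E → Prop) : {e // P e} → Sym2 V :=
  fun e => ends e.val

/-- A `(g,h)`-oriented-coloring: each color class is a `(g,h)`-orientable subgraph. -/
def GHColoring (ends : E → Sym2 V) (g h : V → ℕ∞) {k : ℕ} (C : E → Fin k) : Prop :=
  ∀ c : Fin k, GHOrientable (subEnds ends fun e => C e = c) g h

/-- The `(g,h)`-oriented chromatic index `χ'_{(g,h)}(G)`. -/
def ghChromaticIndex (ends : E → Sym2 V) (g h : V → ℕ∞) : ℕ :=
  sInf {k | ∃ C : E → Fin k, GHColoring ends g h C}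

/-- Ceiling division `⌈a/b⌉` on ℕ. -/
def cdiv (a b : ℕ) : ℕ := (a + b - 1) / b

/-- Replace `∞` values of `g` by the maximum degree `Δ(G)`. -/
def trunc (ends : E → Sym2 V) (g : V → ℕ∞) (v : V) : ℕ :=
  (g v).untopD (maxDegree ends)

/-- The weighted maximum degree `Δ_{(g,h)}(G) = max_v ⌈d(v)/(g(v)+h(v))⌉`
(values `∞` of `g, h` replaced by `Δ(G)`). -/
def ghMaxDegree (ends : E → Sym2 V) (g h : V → ℕ∞) : ℕ :=
  Finset.univ.sup fun v => cdiv (degree ends v) (trunc ends g v + trunc ends h v)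

/-- The weighted maximum density
`W_{(g,h)}(G) = max_{S, g(S) ≥ 1, h(S) ≥ 1} ⌈e(S)/min{g(S),h(S)}⌉`
(values `∞` of `g, h` replaced by `Δ(G)`). -/
def ghMaxDensity (ends : E → Sym2 V) (g h : V → ℕ∞) : ℕ :=
  (Finset.univ.filter fun S : Finset V =>
      (1 ≤ ∑ v ∈ S, g v) ∧ (1 ≤ ∑ v ∈ S, h v)).sup
    fun S => cdiv (edgesWithin ends S)
      (min (∑ v ∈ S, trunc ends g v) (∑ v ∈ S, trunc ends h v))

/-- An edge-coloring into pseudoforests. -/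
def PaColoring (ends : E → Sym2 V) {k : ℕ} (C : E → Fin k) : Prop :=
  ∀ c : Fin k, IsPseudoforest (subEnds ends fun e => C e = c)

/-- The pseudoarboricity `pa(G)`. -/
def pa (ends : E → Sym2 V) : ℕ := sInf {k | ∃ C : E → Fin k, PaColoring ends C}

/-- An edge-coloring into degree-`f` pseudoforests. -/
def PafColoring (ends : E → Sym2 V) (f : V → ℕ) {k : ℕ} (C : E → Fin k) : Prop :=
  ∀ c : Fin k, IsPseudoforest (subEnds ends fun e => C e = c) ∧
    ∀ v, degree (subEnds ends fun e => C e = c) v ≤ f v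

/-- The degree-`f` pseudoarboricity `pa_f(G)`. -/
def paf (ends : E → Sym2 V) (f : V → ℕ) : ℕ :=
  sInf {k | ∃ C : E → Fin k, PafColoring ends f C}

/-- The weighted maximum degree `Δ_f(G) = max_v ⌈d(v)/f(v)⌉`. -/
def fMaxDegree (ends : E → Sym2 V) (f : V → ℕ) : ℕ :=
  Finset.univ.sup fun v => cdiv (degree ends v) (f v)

/-- An edge-coloring into degree-`f` forests. -/
def AfColoring (ends : E → Sym2 V) (f : V → ℕ) {k : ℕ} (C : E → Fin k) : Prop :=
  ∀ c : Fin k, IsForest (subEnds ends fun e => C e = c) ∧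
    ∀ v, degree (subEnds ends fun e => C e = c) v ≤ f v

/-- The degree-`f` arboricity `a_f(G)`. -/
def af (ends : E → Sym2 V) (f : V → ℕ) : ℕ :=
  sInf {k | ∃ C : E → Fin k, AfColoring ends f C}

/-- The arboricity `a(G)`. -/
def arboricity (ends : E → Sym2 V) : ℕ :=
  sInf {k | ∃ C : E → Fin k, ∀ c : Fin k, IsForest (subEnds ends fun e => C e = c)}

/-- The linear arboricity `la(G)`: color classes are linear forests, i.e.
degree-2 forests. -/
def la (ends : E → Sym2 V) : ℕ := af ends fun _ => 2

/-- `G` is `k`-degenerate: every (induced, nonempty) subgraph has a vertex of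
degree at most `k`. -/
def Degenerate (ends : E → Sym2 V) (k : ℕ) : Prop :=
  ∀ S : Finset V, S.Nonempty → ∃ v ∈ S, degreeIn ends S v ≤ k

/-- An `f`-coloring: in each color class every vertex `v` has degree at most `f v`. -/
def FColoring (ends : E → Sym2 V) (f : V → ℕ) {k : ℕ} (C : E → Fin k) : Prop :=
  ∀ c : Fin k, ∀ v, degree (subEnds ends fun e => C e = c) v ≤ f v

/-- The `f`-chromatic index `χ'_f(G)`. -/
def fChromaticIndex (ends : E → Sym2 V) (f : V → ℕ) : ℕ :=
  sInf {k | ∃ C : E → Fin k, FColoring ends f C}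

/-- `G` is bipartite: the vertices can be split into two sides so that every
edge has one endpoint on each side. -/
def Bipartite (ends : E → Sym2 V) : Prop :=
  ∃ P : V → Prop, ∀ e : E, ∃ u v, ends e = s(u, v) ∧ P u ∧ ¬ P v

/-- The list analogue `χ'_{(g,h),ℓ}(G)`: the least `k` such that every list
assignment with lists of size at least `k` admits a coloring from the lists in
which each color class is `(g,h)`-orientable. -/
def ghListChromaticIndex (ends : E → Sym2 V) (g h : V → ℕ∞) : ℕ :=
  sInf {k | ∀ L : E → Finset ℕ, (∀ e, k ≤ (L e).card) →
    ∃ C : E → ℕ, (∀ e, C e ∈ L e) ∧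
      ∀ c : ℕ, GHOrientable (subEnds ends fun e => C e = c) g h}

/-- The list degree-`f` pseudoarboricity `pa_{f,ℓ}(G)`. -/
def pafList (ends : E → Sym2 V) (f : V → ℕ) : ℕ :=
  sInf {k | ∀ L : E → Finset ℕ, (∀ e, k ≤ (L e).card) →
    ∃ C : E → ℕ, (∀ e, C e ∈ L e) ∧
      ∀ c : ℕ, IsPseudoforest (subEnds ends fun e => C e = c) ∧
        ∀ v, degree (subEnds ends fun e => C e = c) v ≤ f v}

/-- The list `f`-chromatic index `χ'_{f,ℓ}(G)`. -/
def fListChromaticIndex (ends : E → Sym2 V) (f : V → ℕ) : ℕ :=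
  sInf {k | ∀ L : E → Finset ℕ, (∀ e, k ≤ (L e).card) →
    ∃ C : E → ℕ, (∀ e, C e ∈ L e) ∧
      ∀ c : ℕ, ∀ v, degree (subEnds ends fun e => C e = c) v ≤ f v}


set_option linter.unusedSectionVars false

-- ENat helpers
theorem enat_le_sub_one {a c : ℕ∞} (h : a + 1 ≤ c) : a ≤ c - 1 := by
  induction c using ENat.recTopCoe with
  | top => simp
  | coe c =>
    induction a using ENat.recTopCoe with
    | top => simp at h
    | coe a => exact_mod_cast Nat.le_sub_one_of_lt (by exact_mod_cast h)

theorem enat_sub_one_add {x : ℕ∞} (r : ℕ∞) (h : 1 ≤ x) : (x - 1) + r = (x + r) - 1 := by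
  induction x using ENat.recTopCoe with
  | top => simp [ENat.top_sub_coe]
  | coe x =>
    induction r using ENat.recTopCoe with
    | top => simp [ENat.top_sub_coe]
    | coe r =>
      have hx : 1 ≤ x := by exact_mod_cast h
      exact_mod_cast congrArg (Nat.cast : ℕ → ℕ∞) (by omega)

theorem enat_deg_helper {d : ℕ} {x y : ℕ∞} (h : (d:ℕ∞) + 1 ≤ x + y) (hx : 1 ≤ x) :
    (d : ℕ∞) ≤ (x - 1) + y := by
  induction x using ENat.recTopCoe with
  | top => simp [ENat.top_sub_coe]
  | coe x =>
    induction y using ENat.recTopCoe with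
    | top => simp
    | coe y =>
      have hx' : 1 ≤ x := by exact_mod_cast hx
      have h' : d + 1 ≤ x + y := by exact_mod_cast h
      exact_mod_cast (by omega : d ≤ x - 1 + y)

theorem enat_deg_helper2 {d : ℕ} {x y : ℕ∞} (h : (d:ℕ∞) + 2 ≤ x + y) (hx : 1 ≤ x) (hy : 1 ≤ y) :
    (d : ℕ∞) ≤ (x - 1) + (y - 1) := by
  induction x using ENat.recTopCoe with
  | top => simp [ENat.top_sub_coe]
  | coe x =>
    induction y using ENat.recTopCoe with
    | top => simp [ENat.top_sub_coe]
    | coe y =>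
      have hx' : 1 ≤ x := by exact_mod_cast hx
      have hy' : 1 ≤ y := by exact_mod_cast hy
      have h' : d + 2 ≤ x + y := by exact_mod_cast h
      exact_mod_cast (by omega : d ≤ (x - 1) + (y - 1))

theorem enat_no_succ_le {x : ℕ∞} (hx : x ≠ ⊤) (h : x + 1 ≤ x) : False :=
  absurd ((ENat.add_one_le_iff hx).mp h) (lt_irrefl x)

-- basic mult lemmas
theorem mult_mk (v : V) (x y : V) :
    mult v (Sym2.mk x y) = (if x = v then 1 else 0) + (if y = v then 1 else 0) := by
  rfl

theorem sym2_exists (s : Sym2 V) : ∃ a b, s = s(a, b) := by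
  induction s using Sym2.ind with
  | _ a b => exact ⟨a, b, rfl⟩

theorem one_le_mult {v : V} {s : Sym2 V} (h : v ∈ s) : 1 ≤ mult v s := by
  obtain ⟨a, b, rfl⟩ := sym2_exists s
  rcases Sym2.mem_iff.mp h with rfl | rfl <;> simp [mult_mk] <;> omega

theorem sum_mult (A : Finset V) (x y : V) :
    ∑ w ∈ A, mult w s(x, y) = (if x ∈ A then 1 else 0) + (if y ∈ A then 1 else 0) := by
  simp only [mult_mk, Finset.sum_add_distrib]
  congr 1 <;> simp [Finset.sum_ite_eq]


-- sum splitting over removing one edge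
theorem sum_split (e0 : E) (f : E → ℕ) :
    ∑ e : E, f e = (∑ e' : {e : E // e ≠ e0}, f e'.val) + f e0 := by
  have h1 : (∑ e' : {e : E // e ≠ e0}, f e'.val) = ∑ e ∈ Finset.univ.erase e0, f e := by
    rw [← Finset.filter_ne' Finset.univ e0]
    exact (Finset.sum_subtype _ (by simp) f).symm
  rw [h1, Finset.sum_erase_add _ _ (Finset.mem_univ e0)]

theorem card_as_sum (p : E → Prop) :
    (Finset.univ.filter p).card = ∑ e : E, if p e then 1 else 0 := by
  rw [Finset.card_filter]

theorem degree_split (e0 : E) (ends : E → Sym2 V) (w : V) :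
    degree ends w = degree (subEnds ends (· ≠ e0)) w + mult w (ends e0) :=
  sum_split e0 (fun e => mult w (ends e))

theorem edgesWithin_split (e0 : E) (ends : E → Sym2 V) (S : Finset V) :
    edgesWithin ends S = edgesWithin (subEnds ends (· ≠ e0)) S +
      (if ∀ w ∈ ends e0, w ∈ S then 1 else 0) := by
  unfold edgesWithin subEnds
  simp only [Finset.card_filter]
  exact sum_split e0 (fun e => if ∀ w ∈ ends e, w ∈ S then 1 else 0)

def extend (e0 : E) (D' : {e : E // e ≠ e0} → V × V) (p : V × V) : E → V × V :=
  fun e => if h : e = e0 then p else D' ⟨e, h⟩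

theorem extend_ne (e0 : E) (D' : {e : E // e ≠ e0} → V × V) (p : V × V)
    (e' : {e : E // e ≠ e0}) : extend e0 D' p e'.val = D' e' := by
  obtain ⟨e, he⟩ := e'
  simp [extend, he]

theorem inDeg_extend (e0 : E) (D' : {e : E // e ≠ e0} → V × V) (p : V × V) (w : V) :
    inDeg (extend e0 D' p) w = inDeg D' w + (if p.2 = w then 1 else 0) := by
  unfold inDeg
  simp only [Finset.card_filter]
  rw [sum_split e0 (fun e => if (extend e0 D' p e).2 = w then 1 else 0)]
  congr 1
  · exact Finset.sum_congr rfl fun e' _ => by rw [extend_ne]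
  · simp [extend]

theorem outDeg_extend (e0 : E) (D' : {e : E // e ≠ e0} → V × V) (p : V × V) (w : V) :
    outDeg (extend e0 D' p) w = outDeg D' w + (if p.1 = w then 1 else 0) := by
  unfold outDeg
  simp only [Finset.card_filter]
  rw [sum_split e0 (fun e => if (extend e0 D' p e).1 = w then 1 else 0)]
  congr 1
  · exact Finset.sum_congr rfl fun e' _ => by rw [extend_ne]
  · simp [extend]

theorem isOrientation_extend (e0 : E) (ends : E → Sym2 V) (D' : {e : E // e ≠ e0} → V × V)
    (p : V × V) (hp : Sym2.mk p.1 p.2 = ends e0)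
    (hor : IsOrientation (subEnds ends (· ≠ e0)) D') : IsOrientation ends (extend e0 D' p) := by
  intro e
  by_cases he : e = e0
  · subst he; simp [extend, hp]
  · rw [show extend e0 D' p e = D' ⟨e, he⟩ from extend_ne e0 D' p ⟨e, he⟩]
    exact hor ⟨e, he⟩

-- easy direction lemmas
theorem degree_eq_inDeg_add_outDeg {ends : E → Sym2 V} {D : E → V × V}
    (hD : IsOrientation ends D) (v : V) : degree ends v = inDeg D v + outDeg D v := by
  unfold degree inDeg outDeg
  simp only [Finset.card_filter]
  rw [← Finset.sum_add_distrib]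
  refine Finset.sum_congr rfl fun e _ => ?_
  rw [← hD e, mult_mk]
  omega

theorem snd_mem_ends {ends : E → Sym2 V} {D : E → V × V} (hD : IsOrientation ends D) (e : E) :
    (D e).2 ∈ ends e := by
  rw [← hD e]; obtain ⟨x, y⟩ := D e; exact Sym2.mem_mk_right x y

theorem fst_mem_ends {ends : E → Sym2 V} {D : E → V × V} (hD : IsOrientation ends D) (e : E) :
    (D e).1 ∈ ends e := by
  rw [← hD e]; obtain ⟨x, y⟩ := D e; exact Sym2.mem_mk_left x y

theorem edgesWithin_le_sum_inDeg {ends : E → Sym2 V} {D : E → V × V}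
    (hD : IsOrientation ends D) (S : Finset V) :
    edgesWithin ends S ≤ ∑ v ∈ S, inDeg D v := by
  have h2 : ∑ v ∈ S, inDeg D v = ∑ e : E, (if (D e).2 ∈ S then 1 else 0) := by
    unfold inDeg
    simp only [Finset.card_filter]
    rw [Finset.sum_comm]
    exact Finset.sum_congr rfl fun e _ => Finset.sum_ite_eq S ((D e).2) (fun _ => 1)
  rw [h2]
  unfold edgesWithin
  simp only [Finset.card_filter]
  refine Finset.sum_le_sum fun e _ => ?_
  by_cases hw : ∀ v ∈ ends e, v ∈ S
  · rw [if_pos hw, if_pos (hw _ (snd_mem_ends hD e))]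
  · simp [hw]

theorem edgesWithin_le_sum_outDeg {ends : E → Sym2 V} {D : E → V × V}
    (hD : IsOrientation ends D) (S : Finset V) :
    edgesWithin ends S ≤ ∑ v ∈ S, outDeg D v := by
  have h2 : ∑ v ∈ S, outDeg D v = ∑ e : E, (if (D e).1 ∈ S then 1 else 0) := by
    unfold outDeg
    simp only [Finset.card_filter]
    rw [Finset.sum_comm]
    exact Finset.sum_congr rfl fun e _ => Finset.sum_ite_eq S ((D e).1) (fun _ => 1)
  rw [h2]
  unfold edgesWithin
  simp only [Finset.card_filter]
  refine Finset.sum_le_sum fun e _ => ?_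
  by_cases hw : ∀ v ∈ ends e, v ∈ S
  · rw [if_pos hw, if_pos (hw _ (fst_mem_ends hD e))]
  · simp [hw]


-- uncrossing
theorem supermodular (ends : E → Sym2 V) (e0 : E) (a b : V) (hend : ends e0 = s(a, b))
    (S T : Finset V) (haS : a ∈ S) (hbS : b ∉ S) (hbT : b ∈ T) (haT : a ∉ T) :
    edgesWithin ends S + edgesWithin ends T + 1 ≤
      edgesWithin ends (S ∪ T) + edgesWithin ends (S ∩ T) := by
  have hsum : (∑ e : E, if e = e0 then (1:ℕ) else 0) = 1 := by
    rw [Finset.sum_ite_eq' Finset.univ e0 (fun _ => 1)]; simp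
  calc edgesWithin ends S + edgesWithin ends T + 1
      = ∑ e : E, ((if ∀ v ∈ ends e, v ∈ S then 1 else 0) +
          (if ∀ v ∈ ends e, v ∈ T then 1 else 0) + (if e = e0 then 1 else 0)) := by
        rw [Finset.sum_add_distrib, Finset.sum_add_distrib, hsum]
        unfold edgesWithin
        simp only [Finset.card_filter]
    _ ≤ ∑ e : E, ((if ∀ v ∈ ends e, v ∈ S ∪ T then 1 else 0) +
          (if ∀ v ∈ ends e, v ∈ S ∩ T then 1 else 0)) := by
        refine Finset.sum_le_sum fun e _ => ?_
        by_cases he : e = e0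
        · have hend' : ends e = s(a, b) := by rw [he, hend]
          have hS : ¬ ∀ v ∈ ends e, v ∈ S := fun hall =>
            hbS (hall b (by rw [hend']; exact Sym2.mem_mk_right a b))
          have hT : ¬ ∀ v ∈ ends e, v ∈ T := fun hall =>
            haT (hall a (by rw [hend']; exact Sym2.mem_mk_left a b))
          have hU : ∀ v ∈ ends e, v ∈ S ∪ T := by
            rw [hend']; intro v hv
            rcases Sym2.mem_iff.mp hv with rfl | rfl
            · exact Finset.mem_union_left _ haS
            · exact Finset.mem_union_right _ hbT
          rw [if_pos he, if_neg hS, if_neg hT, if_pos hU]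
          simpa using Nat.le_add_right 1 _
        · rw [if_neg he, add_zero]
          by_cases hS : ∀ v ∈ ends e, v ∈ S <;> by_cases hT : ∀ v ∈ ends e, v ∈ T
          · have hU : ∀ v ∈ ends e, v ∈ S ∪ T := fun v hv => Finset.mem_union_left _ (hS v hv)
            have hI : ∀ v ∈ ends e, v ∈ S ∩ T := fun v hv =>
              Finset.mem_inter.mpr ⟨hS v hv, hT v hv⟩
            rw [if_pos hS, if_pos hT, if_pos hU, if_pos hI]
          · have hU : ∀ v ∈ ends e, v ∈ S ∪ T := fun v hv => Finset.mem_union_left _ (hS v hv)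
            have hI : ¬ ∀ v ∈ ends e, v ∈ S ∩ T := fun hall =>
              hT fun v hv => (Finset.mem_inter.mp (hall v hv)).2
            rw [if_pos hS, if_neg hT, if_pos hU, if_neg hI]
          · have hU : ∀ v ∈ ends e, v ∈ S ∪ T := fun v hv => Finset.mem_union_right _ (hT v hv)
            have hI : ¬ ∀ v ∈ ends e, v ∈ S ∩ T := fun hall =>
              hS fun v hv => (Finset.mem_inter.mp (hall v hv)).1
            rw [if_neg hS, if_pos hT, if_pos hU, if_neg hI]
          · rw [if_neg hS, if_neg hT]
            simp
    _ = edgesWithin ends (S ∪ T) + edgesWithin ends (S ∩ T) := by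
        rw [Finset.sum_add_distrib]
        unfold edgesWithin
        simp only [Finset.card_filter]

theorem pure_uncross (ends : E → Sym2 V) (f : V → ℕ∞)
    (cond2 : ∀ S : Finset V, (edgesWithin ends S : ℕ∞) ≤ ∑ v ∈ S, f v)
    (e0 : E) (a b : V) (hend : ends e0 = s(a, b))
    (S T : Finset V) (haS : a ∈ S) (hbS : b ∉ S) (hbT : b ∈ T) (haT : a ∉ T)
    (hS : ∑ v ∈ S, f v ≤ (edgesWithin ends S : ℕ∞))
    (hT : ∑ v ∈ T, f v ≤ (edgesWithin ends T : ℕ∞)) : False := by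
  have key := supermodular ends e0 a b hend S T haS hbS hbT haT
  have chain : (∑ v ∈ S, f v + ∑ v ∈ T, f v) + 1 ≤ ∑ v ∈ S, f v + ∑ v ∈ T, f v := by
    calc (∑ v ∈ S, f v + ∑ v ∈ T, f v) + 1
        ≤ ((edgesWithin ends S : ℕ∞) + edgesWithin ends T) + 1 :=
          add_le_add_left (add_le_add hS hT) 1
      _ ≤ (edgesWithin ends (S ∪ T) : ℕ∞) + edgesWithin ends (S ∩ T) := by
          exact_mod_cast Nat.cast_le.mpr key
      _ ≤ (∑ v ∈ S ∪ T, f v) + ∑ v ∈ S ∩ T, f v := add_le_add (cond2 _) (cond2 _)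
      _ = ∑ v ∈ S, f v + ∑ v ∈ T, f v := Finset.sum_union_inter
  have hfin : (∑ v ∈ S, f v + ∑ v ∈ T, f v) ≠ ⊤ := by
    have hle : (∑ v ∈ S, f v + ∑ v ∈ T, f v) ≤ ((edgesWithin ends S + edgesWithin ends T : ℕ) : ℕ∞) := by
      push_cast; exact add_le_add hS hT
    intro htop; rw [htop] at hle; exact (ENat.coe_ne_top _) (top_le_iff.mp hle)
  exact enat_no_succ_le hfin chain

theorem edgesWithin_decomp (ends : E → Sym2 V) (S A : Finset V) :
    edgesWithin ends S =
      (Finset.univ.filter fun e => (∀ w ∈ ends e, w ∈ S) ∧ ∃ w ∈ ends e, w ∈ A).card +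
        edgesWithin ends (S \ A) := by
  unfold edgesWithin
  simp only [Finset.card_filter]
  rw [← Finset.sum_add_distrib]
  refine Finset.sum_congr rfl fun e _ => ?_
  by_cases hS : ∀ w ∈ ends e, w ∈ S
  · by_cases hEx : ∃ w ∈ ends e, w ∈ A
    · have hno : ¬ ∀ w ∈ ends e, w ∈ S \ A := by
        obtain ⟨w, hw, hwA⟩ := hEx
        intro hall; exact (Finset.mem_sdiff.mp (hall w hw)).2 hwA
      rw [if_pos hS, if_pos ⟨hS, hEx⟩, if_neg hno]
    · have hyes : ∀ w ∈ ends e, w ∈ S \ A := fun w hw =>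
        Finset.mem_sdiff.mpr ⟨hS w hw, fun hwA => hEx ⟨w, hw, hwA⟩⟩
      rw [if_pos hS, if_neg (fun hc => hEx hc.2), if_pos hyes]
  · have hno : ¬ ∀ w ∈ ends e, w ∈ S \ A := fun hall =>
      hS fun w hw => (Finset.mem_sdiff.mp (hall w hw)).1
    rw [if_neg hS, if_neg (fun hc => hS hc.1), if_neg hno]

theorem sym2_forall_mem {p : V → Prop} {x y : V} :
    (∀ w ∈ s(x, y), p w) ↔ p x ∧ p y := by
  constructor
  · exact fun H => ⟨H x (Sym2.mem_mk_left x y), H y (Sym2.mem_mk_right x y)⟩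
  · rintro ⟨h1, h2⟩ w hw
    rcases Sym2.mem_iff.mp hw with rfl | rfl
    · exact h1
    · exact h2

theorem sym2_exists_mem {p : V → Prop} {x y : V} :
    (∃ w ∈ s(x, y), p w) ↔ p x ∨ p y := by
  constructor
  · rintro ⟨w, hw, hpw⟩
    rcases Sym2.mem_iff.mp hw with rfl | rfl
    · exact Or.inl hpw
    · exact Or.inr hpw
  · rintro (hp | hp)
    · exact ⟨x, Sym2.mem_mk_left x y, hp⟩
    · exact ⟨y, Sym2.mem_mk_right x y, hp⟩

theorem enat_le_of_add_le_add_right {x y c : ℕ∞} (hc : c ≠ ⊤) (h : x + c ≤ y + c) : x ≤ y := by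
  induction c using ENat.recTopCoe with
  | top => exact absurd rfl hc
  | coe c =>
    induction y using ENat.recTopCoe with
    | top => exact le_top
    | coe y =>
      induction x using ENat.recTopCoe with
      | top =>
        exfalso
        have h2 : ((⊤ : ℕ∞) + c) = ⊤ := by simp
        rw [h2] at h
        exact (ENat.coe_ne_top (y + c)) (top_le_iff.mp (by exact_mod_cast h))
      | coe x =>
        have h' : x + c ≤ y + c := by exact_mod_cast h
        exact_mod_cast (by omega : x ≤ y)

theorem mixed_uncross (ends : E → Sym2 V) (g h : V → ℕ∞)
    (cond1 : ∀ v, (degree ends v : ℕ∞) ≤ g v + h v)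
    (cond2g : ∀ S : Finset V, (edgesWithin ends S : ℕ∞) ≤ ∑ v ∈ S, g v)
    (cond2h : ∀ S : Finset V, (edgesWithin ends S : ℕ∞) ≤ ∑ v ∈ S, h v)
    (e0 : E) (a b : V) (hend : ends e0 = s(a, b))
    (S T : Finset V) (haS : a ∈ S) (hbS : b ∉ S) (haT : a ∈ T) (hbT : b ∉ T)
    (hS : ∑ v ∈ S, g v ≤ (edgesWithin ends S : ℕ∞))
    (hT : ∑ v ∈ T, h v ≤ (edgesWithin ends T : ℕ∞)) : False := by
  set A := S ∩ T with hA
  set incS := (Finset.univ.filter fun e => (∀ w ∈ ends e, w ∈ S) ∧ ∃ w ∈ ends e, w ∈ A).card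
    with hincS
  set incT := (Finset.univ.filter fun e => (∀ w ∈ ends e, w ∈ T) ∧ ∃ w ∈ ends e, w ∈ A).card
    with hincT
  have hfinS : (∑ v ∈ S \ A, g v) ≠ ⊤ := by
    intro htop
    have h1 : (∑ v ∈ S, g v) = ⊤ := by
      have h2 := Finset.sum_le_sum_of_subset (f := g) (Finset.sdiff_subset : S \ A ⊆ S)
      rw [htop] at h2; exact top_le_iff.mp h2
    rw [h1] at hS; exact (ENat.coe_ne_top _) (top_le_iff.mp hS)
  have hfinT : (∑ v ∈ T \ A, h v) ≠ ⊤ := by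
    intro htop
    have h1 : (∑ v ∈ T, h v) = ⊤ := by
      have h2 := Finset.sum_le_sum_of_subset (f := h) (Finset.sdiff_subset : T \ A ⊆ T)
      rw [htop] at h2; exact top_le_iff.mp h2
    rw [h1] at hT; exact (ENat.coe_ne_top _) (top_le_iff.mp hT)
  have hdecS : edgesWithin ends S = incS + edgesWithin ends (S \ A) := by
    rw [hincS]; exact edgesWithin_decomp ends S A
  have hdecT : edgesWithin ends T = incT + edgesWithin ends (T \ A) := by
    rw [hincT]; exact edgesWithin_decomp ends T A
  have stepA : (∑ v ∈ A, g v) ≤ (incS : ℕ∞) := by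
    have hsplit : (∑ v ∈ S \ A, g v) + ∑ v ∈ A, g v = ∑ v ∈ S, g v :=
      Finset.sum_sdiff Finset.inter_subset_left
    have chain : (∑ v ∈ A, g v) + ∑ v ∈ S \ A, g v ≤ (incS : ℕ∞) + ∑ v ∈ S \ A, g v := by
      calc (∑ v ∈ A, g v) + ∑ v ∈ S \ A, g v = ∑ v ∈ S, g v := by rw [add_comm]; exact hsplit
        _ ≤ (edgesWithin ends S : ℕ∞) := hS
        _ = (incS : ℕ∞) + (edgesWithin ends (S \ A) : ℕ∞) := by rw [hdecS]; push_cast; ring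
        _ ≤ (incS : ℕ∞) + ∑ v ∈ S \ A, g v := add_le_add_right (cond2g _) _
    exact enat_le_of_add_le_add_right hfinS chain
  have stepB : (∑ v ∈ A, h v) ≤ (incT : ℕ∞) := by
    have hsplit : (∑ v ∈ T \ A, h v) + ∑ v ∈ A, h v = ∑ v ∈ T, h v :=
      Finset.sum_sdiff Finset.inter_subset_right
    have chain : (∑ v ∈ A, h v) + ∑ v ∈ T \ A, h v ≤ (incT : ℕ∞) + ∑ v ∈ T \ A, h v := by
      calc (∑ v ∈ A, h v) + ∑ v ∈ T \ A, h v = ∑ v ∈ T, h v := by rw [add_comm]; exact hsplit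
        _ ≤ (edgesWithin ends T : ℕ∞) := hT
        _ = (incT : ℕ∞) + (edgesWithin ends (T \ A) : ℕ∞) := by rw [hdecT]; push_cast; ring
        _ ≤ (incT : ℕ∞) + ∑ v ∈ T \ A, h v := add_le_add_right (cond2h _) _
    exact enat_le_of_add_le_add_right hfinT chain
  have haA : a ∈ A := Finset.mem_inter.mpr ⟨haS, haT⟩
  have hsum1 : (∑ e : E, if e = e0 then (1:ℕ) else 0) = 1 := by
    rw [Finset.sum_ite_eq' Finset.univ e0 (fun _ => 1)]; simp
  have stepC : incS + incT + 1 ≤ ∑ w ∈ A, degree ends w := by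
    calc incS + incT + 1
        = ∑ e : E, (((if (∀ w ∈ ends e, w ∈ S) ∧ ∃ w ∈ ends e, w ∈ A then 1 else 0) +
            if (∀ w ∈ ends e, w ∈ T) ∧ ∃ w ∈ ends e, w ∈ A then 1 else 0) +
            if e = e0 then 1 else 0) := by
          rw [Finset.sum_add_distrib, Finset.sum_add_distrib, hsum1, hincS, hincT]
          simp only [Finset.card_filter]
      _ ≤ ∑ e : E, ∑ w ∈ A, mult w (ends e) := by
          refine Finset.sum_le_sum fun e _ => ?_
          obtain ⟨x, y, hxy⟩ := sym2_exists (ends e)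
          rw [hxy, sum_mult]
          by_cases he : e = e0
          · have hxy' : s(x, y) = s(a, b) := by rw [← hxy, he, hend]
            rw [if_pos he]
            have hcases := Sym2.eq_iff.mp hxy'
            have hSfalse : ¬ ((∀ w ∈ s(x,y), w ∈ S) ∧ ∃ w ∈ s(x,y), w ∈ A) := by
              rintro ⟨hall, -⟩
              rcases hcases with ⟨rfl, rfl⟩ | ⟨rfl, rfl⟩
              · exact hbS (sym2_forall_mem.mp hall).2
              · exact hbS (sym2_forall_mem.mp hall).1
            have hTfalse : ¬ ((∀ w ∈ s(x,y), w ∈ T) ∧ ∃ w ∈ s(x,y), w ∈ A) := by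
              rintro ⟨hall, -⟩
              rcases hcases with ⟨rfl, rfl⟩ | ⟨rfl, rfl⟩
              · exact hbT (sym2_forall_mem.mp hall).2
              · exact hbT (sym2_forall_mem.mp hall).1
            rw [if_neg hSfalse, if_neg hTfalse]
            rcases hcases with ⟨rfl, rfl⟩ | ⟨rfl, rfl⟩
            · rw [if_pos haA]; simpa using Nat.le_add_right 1 _
            · rw [if_pos haA]; simpa using Nat.le_add_left 1 _
          · rw [if_neg he, add_zero]
            simp only [sym2_forall_mem, sym2_exists_mem]
            by_cases hxS : x ∈ S <;> by_cases hyS : y ∈ S <;>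
              by_cases hxT : x ∈ T <;> by_cases hyT : y ∈ T <;>
              simp [hA, Finset.mem_inter, hxS, hyS, hxT, hyT]
      _ = ∑ w ∈ A, degree ends w := by
          unfold degree; rw [Finset.sum_comm]
  have stepD : ((∑ w ∈ A, degree ends w : ℕ) : ℕ∞) ≤ (∑ v ∈ A, g v) + ∑ v ∈ A, h v := by
    rw [Nat.cast_sum, ← Finset.sum_add_distrib]
    exact Finset.sum_le_sum fun w _ => cond1 w
  have final : ((incS + incT : ℕ) : ℕ∞) + 1 ≤ ((incS + incT : ℕ) : ℕ∞) := by
    calc ((incS + incT : ℕ) : ℕ∞) + 1 = ((incS + incT + 1 : ℕ) : ℕ∞) := by push_cast; ring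
      _ ≤ ((∑ w ∈ A, degree ends w : ℕ) : ℕ∞) := by exact_mod_cast stepC
      _ ≤ (∑ v ∈ A, g v) + ∑ v ∈ A, h v := stepD
      _ ≤ ((incS : ℕ∞)) + ((incT : ℕ∞)) := add_le_add stepA stepB
      _ = ((incS + incT : ℕ) : ℕ∞) := by push_cast; ring
  exact enat_no_succ_le (ENat.coe_ne_top _) final

-- sums with an updated function
theorem sum_update_sub (g : V → ℕ∞) (v : V) (S : Finset V) (hgv : 1 ≤ g v) (hv : v ∈ S) :
    ∑ w ∈ S, Function.update g v (g v - 1) w = (∑ w ∈ S, g w) - 1 := by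
  rw [Finset.sum_update_of_mem hv, ← Finset.add_sum_erase S g hv, ← Finset.erase_eq,
    enat_sub_one_add _ hgv]

theorem sum_update_eq (g : V → ℕ∞) (v : V) (b : ℕ∞) (S : Finset V) (hv : v ∉ S) :
    ∑ w ∈ S, Function.update g v b w = ∑ w ∈ S, g w :=
  Finset.sum_congr rfl fun w hw =>
    Function.update_of_ne (ne_of_mem_of_not_mem hw hv) _ _

theorem update_bound {g : V → ℕ∞} {v : V} (hgv : 1 ≤ g v) (w : V) :
    Function.update g v (g v - 1) w + (if v = w then (1:ℕ∞) else 0) ≤ g w := by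
  by_cases hw : v = w
  · subst hw
    rw [if_pos rfl, Function.update_self, tsub_add_cancel_of_le hgv]
  · rw [if_neg hw, add_zero, Function.update_of_ne (Ne.symm hw)]

-- transfer of condition (2) to the graph with e0 removed
theorem cond2_transfer (ends : E → Sym2 V) (e0 : E) (u v : V) (hend : ends e0 = s(u, v))
    (g : V → ℕ∞)
    (cond2g : ∀ S : Finset V, (edgesWithin ends S : ℕ∞) ≤ ∑ w ∈ S, g w)
    (hg1 : ∀ S : Finset V, v ∈ S → u ∉ S →
      (edgesWithin ends S : ℕ∞) + 1 ≤ ∑ w ∈ S, g w)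
    (hgv : 1 ≤ g v) (S : Finset V) :
    (edgesWithin (subEnds ends (· ≠ e0)) S : ℕ∞) ≤
      ∑ w ∈ S, Function.update g v (g v - 1) w := by
  have hsplit := edgesWithin_split e0 ends S
  by_cases hv : v ∈ S
  · rw [sum_update_sub g v S hgv hv]
    by_cases hu : u ∈ S
    · have hwithin : ∀ w ∈ ends e0, w ∈ S := by
        rw [hend]; exact sym2_forall_mem.mpr ⟨hu, hv⟩
      rw [if_pos hwithin] at hsplit
      apply enat_le_sub_one
      calc (edgesWithin (subEnds ends (· ≠ e0)) S : ℕ∞) + 1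
          = (edgesWithin ends S : ℕ∞) := by rw [hsplit]; push_cast; ring
        _ ≤ ∑ w ∈ S, g w := cond2g S
    · have hnot : ¬ ∀ w ∈ ends e0, w ∈ S := by
        rw [hend]; intro hall; exact hu (sym2_forall_mem.mp hall).1
      rw [if_neg hnot, add_zero] at hsplit
      apply enat_le_sub_one
      rw [← hsplit]
      exact hg1 S hv hu
  · rw [sum_update_eq g v _ S hv]
    have hle : edgesWithin (subEnds ends (· ≠ e0)) S ≤ edgesWithin ends S := by
      rw [hsplit]; exact Nat.le_add_right _ _
    exact le_trans (Nat.cast_le.mpr hle) (cond2g S)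

-- transfer of condition (1), non-loop case
theorem cond1_transfer (ends : E → Sym2 V) (e0 : E) (u v : V) (huv : u ≠ v)
    (hend : ends e0 = s(u, v)) (g h : V → ℕ∞)
    (cond1 : ∀ w, (degree ends w : ℕ∞) ≤ g w + h w)
    (hgv : 1 ≤ g v) (hhu : 1 ≤ h u) (w : V) :
    (degree (subEnds ends (· ≠ e0)) w : ℕ∞) ≤
      Function.update g v (g v - 1) w + Function.update h u (h u - 1) w := by
  have hd := degree_split e0 ends w
  by_cases hwv : w = v
  · subst hwv
    have hm : mult w (ends e0) = 1 := by
      rw [hend]; simp [mult_mk, huv]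
    have h1 : (degree (subEnds ends (· ≠ e0)) w : ℕ∞) + 1 = (degree ends w : ℕ∞) := by
      rw [hd, hm]; push_cast; ring
    rw [Function.update_self, Function.update_of_ne (Ne.symm huv)]
    exact enat_deg_helper (by rw [h1]; exact cond1 w) hgv
  · by_cases hwu : w = u
    · subst hwu
      have hm : mult w (ends e0) = 1 := by
        rw [hend]; simp [mult_mk, Ne.symm huv]
      have h1 : (degree (subEnds ends (· ≠ e0)) w : ℕ∞) + 1 = (degree ends w : ℕ∞) := by
        rw [hd, hm]; push_cast; ring
      rw [Function.update_self, Function.update_of_ne huv, add_comm]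
      exact enat_deg_helper (by rw [h1, add_comm]; exact cond1 w) hhu
    · have hm : mult w (ends e0) = 0 := by
        rw [hend]; simp [mult_mk]
        exact ⟨fun hc => hwu hc.symm, fun hc => hwv hc.symm⟩
      have h1 : degree (subEnds ends (· ≠ e0)) w = degree ends w := by omega
      rw [h1, Function.update_of_ne (fun hc => hwv hc), Function.update_of_ne (fun hc => hwu hc)]
      exact cond1 w

-- transfer of condition (1), loop case
theorem cond1_transfer_loop (ends : E → Sym2 V) (e0 : E) (a : V)
    (hend : ends e0 = s(a, a)) (g h : V → ℕ∞)
    (cond1 : ∀ w, (degree ends w : ℕ∞) ≤ g w + h w)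
    (hga : 1 ≤ g a) (hha : 1 ≤ h a) (w : V) :
    (degree (subEnds ends (· ≠ e0)) w : ℕ∞) ≤
      Function.update g a (g a - 1) w + Function.update h a (h a - 1) w := by
  have hd := degree_split e0 ends w
  by_cases hw : w = a
  · subst hw
    have hm : mult w (ends e0) = 2 := by
      rw [hend]; simp [mult_mk]
    have h1 : (degree (subEnds ends (· ≠ e0)) w : ℕ∞) + 2 = (degree ends w : ℕ∞) := by
      rw [hd, hm]; push_cast; ring
    rw [Function.update_self, Function.update_self]
    exact enat_deg_helper2 (by rw [h1]; exact cond1 w) hga hha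
  · have hm : mult w (ends e0) = 0 := by
      rw [hend]; simp [mult_mk]
      exact fun hc => hw hc.symm
    have h1 : degree (subEnds ends (· ≠ e0)) w = degree ends w := by omega
    rw [h1, Function.update_of_ne (fun hc => hw hc), Function.update_of_ne (fun hc => hw hc)]
    exact cond1 w

-- lifting an orientation of G - e0 to G
theorem lift_gh (ends : E → Sym2 V) (e0 : E) (u v : V) (hend : ends e0 = s(u, v))
    (g h g' h' : V → ℕ∞)
    (hg : ∀ w, g' w + (if v = w then (1:ℕ∞) else 0) ≤ g w)
    (hh : ∀ w, h' w + (if u = w then (1:ℕ∞) else 0) ≤ h w)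
    (H : GHOrientable (subEnds ends (· ≠ e0)) g' h') : GHOrientable ends g h := by
  obtain ⟨D', hor, hin, hout⟩ := H
  refine ⟨extend e0 D' (u, v),
    isOrientation_extend e0 ends D' (u, v) (by rw [hend]) hor, ?_, ?_⟩
  · intro w
    rw [inDeg_extend]
    push_cast
    refine le_trans (add_le_add_left (hin w) _) ?_
    refine le_trans (le_of_eq ?_) (hg w)
    congr 1
  · intro w
    rw [outDeg_extend]
    push_cast
    refine le_trans (add_le_add_left (hout w) _) ?_
    refine le_trans (le_of_eq ?_) (hh w)
    congr 1

theorem main_aux (n : ℕ) : ∀ (E' : Type) [Fintype E'] (ends : E' → Sym2 V) (g h : V → ℕ∞),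
    Fintype.card E' ≤ n →
    (∀ v, (degree ends v : ℕ∞) ≤ g v + h v) →
    (∀ S : Finset V, (edgesWithin ends S : ℕ∞) ≤ min (∑ v ∈ S, g v) (∑ v ∈ S, h v)) →
    GHOrientable ends g h := by
  induction n with
  | zero =>
    intro E' _ ends g h hcard _ _
    haveI hempty : IsEmpty E' := Fintype.card_eq_zero_iff.mp (Nat.le_zero.mp hcard)
    refine ⟨fun e => hempty.elim e, fun e => hempty.elim e, ?_, ?_⟩
    · intro w; simp [inDeg, Finset.univ_eq_empty]
    · intro w; simp [outDeg, Finset.univ_eq_empty]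
  | succ n IH =>
    intro E' _ ends g h hcard cond1 cond2
    by_cases hle : Fintype.card E' ≤ n
    · exact IH E' ends g h hle cond1 cond2
    have hcard1 : Fintype.card E' = n + 1 := le_antisymm hcard (not_le.mp hle)
    obtain ⟨e0⟩ : Nonempty E' := Fintype.card_pos_iff.mp (by omega)
    have hcard' : Fintype.card {e : E' // e ≠ e0} ≤ n := by
      have h2 : Fintype.card {e : E' // ¬ e = e0} =
          Fintype.card E' - Fintype.card {e : E' // e = e0} :=
        Fintype.card_subtype_compl _
      have h3 : Fintype.card {e : E' // e = e0} = 1 := Fintype.card_subtype_eq e0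
      have h4 : Fintype.card {e : E' // e ≠ e0} = Fintype.card {e : E' // ¬ e = e0} := rfl
      omega
    obtain ⟨a, b, hend⟩ := sym2_exists (ends e0)
    have cond2g : ∀ S : Finset V, (edgesWithin ends S : ℕ∞) ≤ ∑ w ∈ S, g w :=
      fun S => (cond2 S).trans (min_le_left _ _)
    have cond2h : ∀ S : Finset V, (edgesWithin ends S : ℕ∞) ≤ ∑ w ∈ S, h w :=
      fun S => (cond2 S).trans (min_le_right _ _)
    by_cases hab : a = b
    · -- loop case
      subst hab
      have hmem : e0 ∈ Finset.univ.filter (fun e => ∀ w ∈ ends e, w ∈ ({a} : Finset V)) := by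
        refine Finset.mem_filter.mpr ⟨Finset.mem_univ _, ?_⟩
        rw [hend]
        exact sym2_forall_mem.mpr ⟨Finset.mem_singleton_self a, Finset.mem_singleton_self a⟩
      have h1 : (1 : ℕ∞) ≤ (edgesWithin ends {a} : ℕ∞) := by
        exact_mod_cast Nat.cast_le.mpr (Finset.card_pos.mpr ⟨e0, hmem⟩)
      have hga : 1 ≤ g a := by
        have := (h1.trans (cond2g {a}))
        rwa [Finset.sum_singleton] at this
      have hha : 1 ≤ h a := by
        have := (h1.trans (cond2h {a}))
        rwa [Finset.sum_singleton] at this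
      refine lift_gh ends e0 a a hend g h _ _ (update_bound hga) (update_bound hha)
        (IH {e : E' // e ≠ e0} (subEnds ends (· ≠ e0)) _ _ hcard'
          (cond1_transfer_loop ends e0 a hend g h cond1 hga hha)
          (fun S => le_min
            (cond2_transfer ends e0 a a hend g cond2g (fun S h1 h2 => absurd h1 h2) hga S)
            (cond2_transfer ends e0 a a hend h cond2h (fun S h1 h2 => absurd h1 h2) hha S)))
    · -- non-loop case
      by_cases hblock1 : (∃ S : Finset V, b ∈ S ∧ a ∉ S ∧
            (∑ w ∈ S, g w) ≤ (edgesWithin ends S : ℕ∞)) ∨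
          (∃ S : Finset V, a ∈ S ∧ b ∉ S ∧ (∑ w ∈ S, h w) ≤ (edgesWithin ends S : ℕ∞))
      · by_cases hblock2 : (∃ S : Finset V, a ∈ S ∧ b ∉ S ∧
              (∑ w ∈ S, g w) ≤ (edgesWithin ends S : ℕ∞)) ∨
            (∃ S : Finset V, b ∈ S ∧ a ∉ S ∧ (∑ w ∈ S, h w) ≤ (edgesWithin ends S : ℕ∞))
        · exfalso
          have hend' : ends e0 = s(b, a) := by rw [hend, Sym2.eq_swap]
          rcases hblock1 with ⟨S, hbS, haS, htS⟩ | ⟨S, haS, hbS, htS⟩ <;>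
            rcases hblock2 with ⟨T, haT, hbT, htT⟩ | ⟨T, hbT, haT, htT⟩
          · exact pure_uncross ends g cond2g e0 a b hend T S haT hbT hbS haS htT htS
          · exact mixed_uncross ends g h cond1 cond2g cond2h e0 b a hend' S T
              hbS haS hbT haT htS htT
          · exact mixed_uncross ends g h cond1 cond2g cond2h e0 a b hend T S
              haT hbT haS hbS htT htS
          · exact pure_uncross ends h cond2h e0 a b hend S T haS hbS hbT haT htS htT
        · -- orient e0 from b to a
          push_neg at hblock2
          obtain ⟨hng, hnh⟩ := hblock2
          have hg1 : ∀ S : Finset V, a ∈ S → b ∉ S →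
              (edgesWithin ends S : ℕ∞) + 1 ≤ ∑ w ∈ S, g w := fun S h1 h2 =>
            (ENat.add_one_le_iff (ENat.coe_ne_top _)).mpr (hng S h1 h2)
          have hh1 : ∀ S : Finset V, b ∈ S → a ∉ S →
              (edgesWithin ends S : ℕ∞) + 1 ≤ ∑ w ∈ S, h w := fun S h1 h2 =>
            (ENat.add_one_le_iff (ENat.coe_ne_top _)).mpr (hnh S h1 h2)
          have hga : 1 ≤ g a := by
            have := hg1 {a} (Finset.mem_singleton_self a)
              (Finset.notMem_singleton.mpr (Ne.symm hab))
            rw [Finset.sum_singleton] at this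
            exact le_trans (le_add_self) this
          have hhb : 1 ≤ h b := by
            have := hh1 {b} (Finset.mem_singleton_self b)
              (Finset.notMem_singleton.mpr hab)
            rw [Finset.sum_singleton] at this
            exact le_trans (le_add_self) this
          have hend' : ends e0 = s(b, a) := by rw [hend, Sym2.eq_swap]
          refine lift_gh ends e0 b a hend' g h _ _ (update_bound hga) (update_bound hhb)
            (IH {e : E' // e ≠ e0} (subEnds ends (· ≠ e0)) _ _ hcard'
              (cond1_transfer ends e0 b a (Ne.symm hab) hend' g h cond1 hga hhb)
              (fun S => le_min
                (cond2_transfer ends e0 b a hend' g cond2g hg1 hga S)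
                (cond2_transfer ends e0 a b hend h cond2h hh1 hhb S)))
      · -- orient e0 from a to b
        push_neg at hblock1
        obtain ⟨hng, hnh⟩ := hblock1
        have hg1 : ∀ S : Finset V, b ∈ S → a ∉ S →
            (edgesWithin ends S : ℕ∞) + 1 ≤ ∑ w ∈ S, g w := fun S h1 h2 =>
          (ENat.add_one_le_iff (ENat.coe_ne_top _)).mpr (hng S h1 h2)
        have hh1 : ∀ S : Finset V, a ∈ S → b ∉ S →
            (edgesWithin ends S : ℕ∞) + 1 ≤ ∑ w ∈ S, h w := fun S h1 h2 =>
          (ENat.add_one_le_iff (ENat.coe_ne_top _)).mpr (hnh S h1 h2)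
        have hgb : 1 ≤ g b := by
          have := hg1 {b} (Finset.mem_singleton_self b)
            (Finset.notMem_singleton.mpr hab)
          rw [Finset.sum_singleton] at this
          exact le_trans (le_add_self) this
        have hha : 1 ≤ h a := by
          have := hh1 {a} (Finset.mem_singleton_self a)
            (Finset.notMem_singleton.mpr (Ne.symm hab))
          rw [Finset.sum_singleton] at this
          exact le_trans (le_add_self) this
        have hend' : ends e0 = s(b, a) := by rw [hend, Sym2.eq_swap]
        refine lift_gh ends e0 a b hend g h _ _ (update_bound hgb) (update_bound hha)
          (IH {e : E' // e ≠ e0} (subEnds ends (· ≠ e0)) _ _ hcard'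
            (cond1_transfer ends e0 a b hab hend g h cond1 hgb hha)
            (fun S => le_min
              (cond2_transfer ends e0 a b hend g cond2g hg1 hgb S)
              (cond2_transfer ends e0 b a hend' h cond2h hh1 hha S)))


/-- Entringer–Tolman: `G` is `(g,h)`-orientable iff
(1) `d(v) ≤ g(v) + h(v)` for every vertex `v`, and
(2) `e(S) ≤ min {g(S), h(S)}` for every vertex subset `S`. -/
theorem gh_orientable_iff {V E : Type} [Fintype V] [Fintype E] [DecidableEq V]
    (ends : E → Sym2 V) (g h : V → ℕ∞) :
    GHOrientable ends g h ↔
      (∀ v : V, (degree ends v : ℕ∞) ≤ g v + h v) ∧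
      (∀ S : Finset V, (edgesWithin ends S : ℕ∞) ≤ min (∑ v ∈ S, g v) (∑ v ∈ S, h v)) := by
  constructor
  · rintro ⟨D, hor, hin, hout⟩
    constructor
    · intro v
      rw [degree_eq_inDeg_add_outDeg hor v]
      push_cast
      exact add_le_add (hin v) (hout v)
    · intro S
      refine le_min ?_ ?_
      · calc (edgesWithin ends S : ℕ∞)
            ≤ ((∑ v ∈ S, inDeg D v : ℕ) : ℕ∞) :=
              Nat.cast_le.mpr (edgesWithin_le_sum_inDeg hor S)
          _ = ∑ v ∈ S, (inDeg D v : ℕ∞) := Nat.cast_sum _ _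
          _ ≤ ∑ v ∈ S, g v := Finset.sum_le_sum fun v _ => hin v
      · calc (edgesWithin ends S : ℕ∞)
            ≤ ((∑ v ∈ S, outDeg D v : ℕ) : ℕ∞) :=
              Nat.cast_le.mpr (edgesWithin_le_sum_outDeg hor S)
          _ = ∑ v ∈ S, (outDeg D v : ℕ∞) := Nat.cast_sum _ _
          _ ≤ ∑ v ∈ S, h v := Finset.sum_le_sum fun v _ => hout v
  · rintro ⟨c1, c2⟩
    exact main_aux (Fintype.card E) E ends g h le_rfl c1 c2

end MG
end
end

section
/- For every multigraph G, the pseudoarboricity of G equals the maximum over nonempty vertex subsets S of ⌈e(S)/|S|⌉, i.e., pa(G) = max_{S ⊆ V(G), |S| ≥ 1} ⌈e(S)/|S|⌉. -/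
open Classical

noncomputable section

namespace MG

variable {V : Type} {E : Type} [Fintype V] [Fintype E] [DecidableEq V]

/-! ### Auxiliary lemmas for Hakimi's theorem -/

section Aux

lemma sym2_exists_rep (z : Sym2 V) : ∃ p q, z = s(p, q) :=
  Sym2.ind (fun p q => ⟨p, q, rfl⟩) z

lemma adj_symm {ends : E → Sym2 V} {u v : V} (h : Adj ends u v) : Adj ends v u := by
  obtain ⟨e, he⟩ := h
  exact ⟨e, he.trans Sym2.eq_swap⟩

lemma reaches_symm {ends : E → Sym2 V} {u v : V} (h : Reaches ends u v) :
    Reaches ends v u := by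
  unfold Reaches at h ⊢
  induction h with
  | refl => exact Relation.ReflTransGen.refl
  | tail _ hab ih => exact Relation.ReflTransGen.head (adj_symm hab) ih

lemma mem_component_self (ends : E → Sym2 V) (v : V) : v ∈ component ends v := by
  simp only [component, Finset.mem_filter, Finset.mem_univ, true_and]
  exact Relation.ReflTransGen.refl

lemma reaches_of_mem_component {ends : E → Sym2 V} {v u : V}
    (h : u ∈ component ends v) : Reaches ends v u := by
  simpa [component] using h

lemma mem_component_of_mem_edge {ends : E → Sym2 V} {v0 x y : V} {e : E}
    (hx : x ∈ component ends v0) (hxe : x ∈ ends e) (hye : y ∈ ends e) :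
    y ∈ component ends v0 := by
  simp only [component, Finset.mem_filter, Finset.mem_univ, true_and] at hx ⊢
  obtain ⟨p, q, hpq⟩ := sym2_exists_rep (ends e)
  rw [hpq, Sym2.mem_iff] at hxe hye
  have hadj : Adj ends p q := ⟨e, hpq⟩
  have hxy : x = y ∨ Adj ends x y := by
    rcases hxe with rfl | rfl <;> rcases hye with rfl | rfl
    · exact Or.inl rfl
    · exact Or.inr hadj
    · exact Or.inr (adj_symm hadj)
    · exact Or.inl rfl
  rcases hxy with rfl | h
  · exact hx
  · exact hx.tail h

/-- The edges having at least one endpoint in `A`. -/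
def touching (ends : E → Sym2 V) (A : Finset V) : Finset E :=
  Finset.univ.filter fun e => ∃ v ∈ ends e, v ∈ A

lemma exists_crossing {α : Type} {r : α → α → Prop} {P : α → Prop} {a b : α}
    (h : Relation.ReflTransGen r a b) (ha : P a) :
    ¬ P b → ∃ x y, r x y ∧ P x ∧ ¬ P y := by
  induction h with
  | refl => exact fun hb => absurd ha hb
  | @tail c d h' r' ih =>
    intro hb
    by_cases hc : P c
    · exact ⟨c, d, r', hc, hb⟩
    · exact ih hc

lemma le_card_touching (ends : E → Sym2 V) (v0 : V) :
    ∀ A : Finset V, A ⊆ component ends v0 →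
      (∃ w ∈ component ends v0, w ∉ A) → A.card ≤ (touching ends A).card := by
  intro A
  induction A using Finset.strongInduction with
  | _ A ih =>
    rintro hsub ⟨w, hwK, hwA⟩
    rcases A.eq_empty_or_nonempty with rfl | ⟨a, ha⟩
    · simp
    · have hra : Reaches ends a w :=
        (reaches_symm (reaches_of_mem_component (hsub ha))).trans
          (reaches_of_mem_component hwK)
      obtain ⟨x, y, ⟨e, he⟩, hxA, hyA⟩ :=
        exists_crossing (P := fun z => z ∈ A) hra ha hwA
      have hxe : x ∈ ends e := by rw [he]; exact Sym2.mem_mk_left x y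
      have hsub' : A.erase x ⊆ component ends v0 :=
        (A.erase_subset x).trans hsub
      have hwit' : ∃ w ∈ component ends v0, w ∉ A.erase x :=
        ⟨w, hwK, fun hw => hwA (A.erase_subset x hw)⟩
      have hlt : A.erase x ⊂ A := Finset.erase_ssubset hxA
      have hIH := ih (A.erase x) hlt hsub' hwit'
      have hmono : touching ends (A.erase x) ⊆ touching ends A := by
        intro f hf
        simp only [touching, Finset.mem_filter, Finset.mem_univ, true_and] at hf ⊢
        obtain ⟨v, hv1, hv2⟩ := hf
        exact ⟨v, hv1, A.erase_subset x hv2⟩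
      have heA : e ∈ touching ends A := by
        simp only [touching, Finset.mem_filter, Finset.mem_univ, true_and]
        exact ⟨x, hxe, hxA⟩
      have heE : e ∉ touching ends (A.erase x) := by
        simp only [touching, Finset.mem_filter, Finset.mem_univ, true_and]
        rintro ⟨v, hv1, hv2⟩
        rw [he, Sym2.mem_iff] at hv1
        rcases hv1 with rfl | rfl
        · exact (A.notMem_erase v) hv2
        · exact hyA (A.erase_subset x hv2)
      have hins : insert e (touching ends (A.erase x)) ⊆ touching ends A :=
        Finset.insert_subset heA hmono
      have hcard : (touching ends (A.erase x)).card + 1 ≤ (touching ends A).card := by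
        have := Finset.card_le_card hins
        rwa [Finset.card_insert_of_notMem heE] at this
      have hAe : (A.erase x).card + 1 = A.card := Finset.card_erase_add_one hxA
      omega

lemma edgesWithin_mono (ends : E → Sym2 V) {S T : Finset V} (h : S ⊆ T) :
    edgesWithin ends S ≤ edgesWithin ends T := by
  apply Finset.card_le_card
  intro e he
  simp only [edgesWithin, Finset.mem_filter, Finset.mem_univ, true_and] at he ⊢
  exact fun v hv => h (he v hv)

lemma edgesWithin_subset_component (ends : E → Sym2 V) (v0 : V) (T : Finset V)
    (hpf : IsPseudoforest ends)
    (hT : T ⊆ component ends v0) (hTne : T.Nonempty) :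
    edgesWithin ends T ≤ T.card := by
  set K := component ends v0 with hK
  set A := K \ T with hA
  obtain ⟨w, hw⟩ := hTne
  have hwK : w ∈ K := hT hw
  -- the two edge sets, both inside edges within K
  have h1 : (Finset.univ.filter fun e => ∀ v ∈ ends e, v ∈ T)
      ⊆ Finset.univ.filter fun e => ∀ v ∈ ends e, v ∈ K := by
    intro e he
    simp only [Finset.mem_filter, Finset.mem_univ, true_and] at he ⊢
    exact fun v hv => hT (he v hv)
  have h2 : touching ends A ⊆ Finset.univ.filter fun e => ∀ v ∈ ends e, v ∈ K := by
    intro e he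
    simp only [touching, Finset.mem_filter, Finset.mem_univ, true_and] at he ⊢
    obtain ⟨v, hv1, hv2⟩ := he
    have hvK : v ∈ K := (Finset.sdiff_subset) hv2
    exact fun u hu => mem_component_of_mem_edge hvK hv1 hu
  have hdisj : Disjoint (Finset.univ.filter fun e => ∀ v ∈ ends e, v ∈ T)
      (touching ends A) := by
    rw [Finset.disjoint_left]
    intro e he1 he2
    simp only [Finset.mem_filter, Finset.mem_univ, true_and] at he1
    simp only [touching, Finset.mem_filter, Finset.mem_univ, true_and] at he2
    obtain ⟨v, hv1, hv2⟩ := he2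
    rw [hA, Finset.mem_sdiff] at hv2
    exact hv2.2 (he1 v hv1)
  have hAcard : A.card ≤ (touching ends A).card := by
    apply le_card_touching ends v0 A Finset.sdiff_subset
    exact ⟨w, hwK, by rw [hA, Finset.mem_sdiff]; exact fun h => h.2 hw⟩
  have hunion : (Finset.univ.filter fun e => ∀ v ∈ ends e, v ∈ T) ∪ touching ends A
      ⊆ Finset.univ.filter fun e => ∀ v ∈ ends e, v ∈ K :=
    Finset.union_subset h1 h2
  have hcu := Finset.card_le_card hunion
  rw [Finset.card_union_of_disjoint hdisj] at hcu
  have hKcard : edgesWithin ends K ≤ K.card := hpf v0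
  have hsplit : A.card + T.card = K.card := Finset.card_sdiff_add_card_eq_card hT
  simp only [edgesWithin] at hKcard ⊢
  omega

lemma edgesWithin_le_card_of_pseudoforest {ends : E → Sym2 V}
    (hpf : IsPseudoforest ends) :
    ∀ S : Finset V, edgesWithin ends S ≤ S.card := by
  intro S
  induction S using Finset.strongInduction with
  | _ S ih =>
    rcases S.eq_empty_or_nonempty with rfl | ⟨v, hv⟩
    · have : edgesWithin ends (∅ : Finset V) = 0 := by
        rw [edgesWithin, Finset.card_eq_zero, Finset.filter_eq_empty_iff]
        intro e _
        obtain ⟨p, q, hpq⟩ := sym2_exists_rep (ends e)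
        intro h
        exact absurd (h p (by rw [hpq]; exact Sym2.mem_mk_left p q))
          (Finset.notMem_empty p)
      simp [this]
    · set K := component ends v with hK
      have hvK : v ∈ K := mem_component_self ends v
      -- split the edges within S
      have hsplit : (Finset.univ.filter fun e => ∀ u ∈ ends e, u ∈ S)
          = (Finset.univ.filter fun e => ∀ u ∈ ends e, u ∈ S ∩ K)
            ∪ (Finset.univ.filter fun e => ∀ u ∈ ends e, u ∈ S \ K) := by
        ext e
        simp only [Finset.mem_filter, Finset.mem_univ, true_and, Finset.mem_union,
          Finset.mem_inter, Finset.mem_sdiff]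
        constructor
        · intro h
          by_cases hcase : ∃ u ∈ ends e, u ∈ K
          · obtain ⟨u, hu1, hu2⟩ := hcase
            exact Or.inl fun x hx => ⟨h x hx, mem_component_of_mem_edge hu2 hu1 hx⟩
          · push_neg at hcase
            exact Or.inr fun x hx => ⟨h x hx, hcase x hx⟩
        · rintro (h | h) <;> exact fun x hx => (h x hx).1
      have hdisj : Disjoint (Finset.univ.filter fun e => ∀ u ∈ ends e, u ∈ S ∩ K)
          (Finset.univ.filter fun e => ∀ u ∈ ends e, u ∈ S \ K) := by
        rw [Finset.disjoint_left]
        intro e he1 he2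
        simp only [Finset.mem_filter, Finset.mem_univ, true_and] at he1 he2
        obtain ⟨p, q, hpq⟩ := sym2_exists_rep (ends e)
        have hp : p ∈ ends e := by rw [hpq]; exact Sym2.mem_mk_left p q
        have h1 := he1 p hp
        have h2 := he2 p hp
        rw [Finset.mem_inter] at h1
        rw [Finset.mem_sdiff] at h2
        exact h2.2 h1.2
      have hcards : edgesWithin ends S
          = edgesWithin ends (S ∩ K) + edgesWithin ends (S \ K) := by
        simp only [edgesWithin]
        rw [hsplit, Finset.card_union_of_disjoint hdisj]
      have h1 : edgesWithin ends (S ∩ K) ≤ (S ∩ K).card := by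
        apply edgesWithin_subset_component ends v (S ∩ K) hpf Finset.inter_subset_right
        exact ⟨v, Finset.mem_inter.mpr ⟨hv, hvK⟩⟩
      have h2 : edgesWithin ends (S \ K) ≤ (S \ K).card := by
        apply ih
        rw [Finset.ssubset_iff_of_subset Finset.sdiff_subset]
        exact ⟨v, hv, by simp [hvK]⟩
      have h3 : (S ∩ K).card + (S \ K).card = S.card :=
        Finset.card_inter_add_card_sdiff S K
      omega

lemma pseudoforest_of_head (ends : E → Sym2 V) (h : E → V)
    (hmem : ∀ e, h e ∈ ends e) (hinj : Function.Injective h) :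
    IsPseudoforest ends := by
  intro v
  apply Finset.card_le_card_of_injOn h
  · intro e he
    simp only [edgesWithin, Finset.mem_coe, Set.mem_setOf_eq, Finset.mem_filter, Finset.mem_univ, true_and] at he
    exact he (h e) (hmem e)
  · exact hinj.injOn

lemma edgesWithin_eq_sum_colors (ends : E → Sym2 V) {k : ℕ} (C : E → Fin k)
    (S : Finset V) :
    edgesWithin ends S = ∑ c : Fin k, edgesWithin (subEnds ends fun e => C e = c) S := by
  have hfib : edgesWithin ends S = ∑ c : Fin k,
      ((Finset.univ.filter fun e => ∀ v ∈ ends e, v ∈ S).filter fun e => C e = c).card := by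
    exact Finset.card_eq_sum_card_fiberwise (fun e _ => Finset.mem_univ (C e))
  rw [hfib]
  apply Finset.sum_congr rfl
  intro c _
  apply Eq.symm
  apply Finset.card_bij (fun (e : {e // C e = c}) _ => e.val)
  · intro a ha
    simp only [edgesWithin, subEnds, Finset.mem_filter, Finset.mem_univ, true_and] at ha ⊢
    exact ⟨(Finset.mem_filter.mp ha).2, a.2⟩
  · intro a _ b _ hab
    exact Subtype.ext hab
  · intro b hb
    simp only [Finset.mem_filter, Finset.mem_univ, true_and] at hb
    refine ⟨⟨b, hb.2⟩, ?_, rfl⟩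
    simp only [edgesWithin, subEnds, Finset.mem_filter, Finset.mem_univ, true_and]
    exact Finset.mem_filter.mpr ⟨Finset.mem_univ _, hb.1⟩

lemma cdiv_le_iff {a b k : ℕ} (hb : 0 < b) : cdiv a b ≤ k ↔ a ≤ k * b := by
  unfold cdiv
  rw [Nat.div_le_iff_le_mul_add_pred hb, Nat.mul_comm k b]
  obtain ⟨m, hm⟩ : ∃ m, b * k = m := ⟨_, rfl⟩
  rw [hm]
  omega

/-- The endpoints of an edge as a `Finset`. -/
def endpts (z : Sym2 V) : Finset V := Finset.univ.filter (· ∈ z)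

lemma mem_endpts {z : Sym2 V} {v : V} : v ∈ endpts z ↔ v ∈ z := by
  simp [endpts]

lemma exists_paColoring (ends : E → Sym2 V) (k : ℕ)
    (hk : ∀ S : Finset V, S.Nonempty → edgesWithin ends S ≤ k * S.card) :
    ∃ C : E → Fin k, PaColoring ends C := by
  have hall : ∀ A : Finset E,
      A.card ≤ (A.biUnion fun e => endpts (ends e) ×ˢ (Finset.univ : Finset (Fin k))).card := by
    intro A
    rcases A.eq_empty_or_nonempty with rfl | ⟨e0, he0⟩
    · simp
    · set S := A.biUnion fun e => endpts (ends e) with hS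
      have h1 : (A.biUnion fun e => endpts (ends e) ×ˢ (Finset.univ : Finset (Fin k)))
          = S ×ˢ (Finset.univ : Finset (Fin k)) := by
        ext ⟨v, i⟩
        simp only [Finset.mem_biUnion, Finset.mem_product, Finset.mem_univ, and_true, hS]
      rw [h1, Finset.card_product, Finset.card_univ, Fintype.card_fin]
      have hAS : A.card ≤ edgesWithin ends S := by
        apply Finset.card_le_card
        intro e he
        simp only [Finset.mem_filter, Finset.mem_univ, true_and]
        intro v hv
        rw [hS]
        exact Finset.mem_biUnion.mpr ⟨e, he, mem_endpts.mpr hv⟩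
      have hSne : S.Nonempty := by
        obtain ⟨p, q, hpq⟩ := sym2_exists_rep (ends e0)
        refine ⟨p, Finset.mem_biUnion.mpr ⟨e0, he0, mem_endpts.mpr ?_⟩⟩
        rw [hpq]; exact Sym2.mem_mk_left p q
      calc A.card ≤ edgesWithin ends S := hAS
        _ ≤ k * S.card := hk S hSne
        _ = S.card * k := Nat.mul_comm _ _
  obtain ⟨f, finj, hf⟩ :=
    (Finset.all_card_le_biUnion_card_iff_exists_injective
      (fun e => endpts (ends e) ×ˢ (Finset.univ : Finset (Fin k)))).mp hall
  refine ⟨fun e => (f e).2, ?_⟩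
  intro c
  apply pseudoforest_of_head _ (fun e => (f e.val).1)
  · intro e
    have := hf e.val
    rw [Finset.mem_product] at this
    exact mem_endpts.mp this.1
  · intro e e' hee
    have h2 : (f e.val).2 = (f e'.val).2 := e.2.trans e'.2.symm
    have : f e.val = f e'.val := Prod.ext hee h2
    exact Subtype.ext (finj this)

lemma paSet_nonempty (ends : E → Sym2 V) :
    ∃ k : ℕ, ∃ C : E → Fin k, PaColoring ends C := by
  refine ⟨Fintype.card E, fun e => Fintype.equivFin E e, ?_⟩
  intro c
  intro v
  show edgesWithin (subEnds ends fun e => Fintype.equivFin E e = c)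
      (component (subEnds ends fun e => Fintype.equivFin E e = c) v)
    ≤ (component (subEnds ends fun e => Fintype.equivFin E e = c) v).card
  have hcard : edgesWithin (subEnds ends fun e => Fintype.equivFin E e = c)
      (component (subEnds ends fun e => Fintype.equivFin E e = c) v) ≤ 1 := by
    have h1 : Fintype.card {e : E // Fintype.equivFin E e = c} ≤ 1 := by
      rw [Fintype.card_le_one_iff]
      intro a b
      exact Subtype.ext ((Fintype.equivFin E).injective (a.2.trans b.2.symm))
    calc edgesWithin _ _ ≤ (Finset.univ : Finset {e : E // Fintype.equivFin E e = c}).card :=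
          Finset.card_le_card (Finset.filter_subset _ _)
      _ ≤ 1 := by rwa [Finset.card_univ]
  have hvc : 1 ≤ (component (subEnds ends fun e => Fintype.equivFin E e = c) v).card :=
    Finset.card_pos.mpr ⟨v, mem_component_self _ v⟩
  exact hcard.trans hvc

end Aux

/-- Hakimi's theorem: for every multigraph `G`,
`pa(G) = max_{S ⊆ V(G), |S| ≥ 1} ⌈e(S)/|S|⌉`. -/
theorem pa_eq_maxDensity {V E : Type} [Fintype V] [Fintype E] [DecidableEq V]
    (ends : E → Sym2 V) :
    pa ends = (Finset.univ.filter fun S : Finset V => S.Nonempty).sup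
      (fun S => cdiv (edgesWithin ends S) S.card) := by
  set D := (Finset.univ.filter fun S : Finset V => S.Nonempty).sup
      (fun S => cdiv (edgesWithin ends S) S.card) with hD
  apply le_antisymm
  · -- pa ≤ D
    have hk : ∀ S : Finset V, S.Nonempty → edgesWithin ends S ≤ D * S.card := by
      intro S hS
      have hle : cdiv (edgesWithin ends S) S.card ≤ D := by
        rw [hD]
        exact Finset.le_sup (f := fun S => cdiv (edgesWithin ends S) S.card)
          (Finset.mem_filter.mpr ⟨Finset.mem_univ S, hS⟩)
      exact (cdiv_le_iff (Finset.card_pos.mpr hS)).mp hle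
    obtain ⟨C, hC⟩ := exists_paColoring ends D hk
    exact Nat.sInf_le ⟨C, hC⟩
  · -- D ≤ pa
    apply Finset.sup_le
    intro S hS
    have hSne : S.Nonempty := (Finset.mem_filter.mp hS).2
    rw [cdiv_le_iff (Finset.card_pos.mpr hSne)]
    have hmem : pa ends ∈ {k : ℕ | ∃ C : E → Fin k, PaColoring ends C} := by
      apply Nat.sInf_mem
      obtain ⟨k, C, hC⟩ := paSet_nonempty ends
      exact ⟨k, C, hC⟩
    obtain ⟨C, hC⟩ := hmem
    rw [edgesWithin_eq_sum_colors ends C S]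
    calc ∑ c : Fin (pa ends), edgesWithin (subEnds ends fun e => C e = c) S
        ≤ ∑ _c : Fin (pa ends), S.card :=
          Finset.sum_le_sum fun c _ => edgesWithin_le_card_of_pseudoforest (hC c) S
      _ = pa ends * S.card := by
          rw [Finset.sum_const, Finset.card_univ, Fintype.card_fin, smul_eq_mul]

end MG
end
end
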